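/- The norm γ is finitely generated: for all Banach spaces X₁,…,Xₙ, Y and every u ∈ X₁ ⊗ ⋯ ⊗ Xₙ ⊗ Y, γ(u; X₁ ⊗ ⋯ ⊗ Xₙ ⊗ Y) = inf γ(u; E₁ ⊗ ⋯ ⊗ Eₙ ⊗ F), where the infimum is taken over all finite-dimensional subspaces Eᵢ ⊆ Xᵢ and F ⊆ Y such that u ∈ E₁ ⊗ ⋯ ⊗ Eₙ ⊗ F. -/

import Mathlib

open scoped NNReal

noncomputable section

universe u

variable (𝕜 : Type u) [RCLike 𝕜]

/-- A factorization of the bounded multilinear operator `T` through a Hilbert space: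
a Hilbert space `H`, a bounded multilinear operator `A` into `H`, and a Lipschitz map `B`
defined on the image of `A`, such that `T = B ∘ A`. -/
structure HilbertFactorization {n : ℕ} {X : Fin n → Type u} {Y : Type u}
    [∀ i, NormedAddCommGroup (X i)] [∀ i, NormedSpace 𝕜 (X i)]
    [NormedAddCommGroup Y] [NormedSpace 𝕜 Y]
    (T : ContinuousMultilinearMap 𝕜 X Y) where
  H : Type u
  [instNormed : NormedAddCommGroup H]
  [instInner : InnerProductSpace 𝕜 H]
  [instComplete : CompleteSpace H]
  A : ContinuousMultilinearMap 𝕜 X H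
  B : H → Y
  K : ℝ≥0
  lipschitz : LipschitzOnWith K B (Set.range fun x => A x)
  factors : ∀ x, T x = B (A x)

attribute [instance] HilbertFactorization.instNormed HilbertFactorization.instInner
  HilbertFactorization.instComplete

variable {𝕜}

/-- `T` factors through a Hilbert space. -/
def FactorsThroughHilbert {n : ℕ} {X : Fin n → Type u} {Y : Type u}
    [∀ i, NormedAddCommGroup (X i)] [∀ i, NormedSpace 𝕜 (X i)]
    [NormedAddCommGroup Y] [NormedSpace 𝕜 Y]
    (T : ContinuousMultilinearMap 𝕜 X Y) : Prop :=
  Nonempty (HilbertFactorization 𝕜 T)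

/-- The constant `Γ(T)`: the infimum of `‖A‖ · Lip(B)` over all factorizations of `T`
through a Hilbert space. -/
def gammaNorm {n : ℕ} {X : Fin n → Type u} {Y : Type u}
    [∀ i, NormedAddCommGroup (X i)] [∀ i, NormedSpace 𝕜 (X i)]
    [NormedAddCommGroup Y] [NormedSpace 𝕜 Y]
    (T : ContinuousMultilinearMap 𝕜 X Y) : ℝ :=
  sInf {c : ℝ | ∃ F : HilbertFactorization 𝕜 T, c = ‖F.A‖ * (F.K : ℝ)}

open scoped TensorProduct
open PiTensorProduct

variable (𝕜)

/-- The relation `≤_π` between finite families of (pairs of) decomposable tensors,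
parametrized by the generating tuples: `(pᵢ, qᵢ) ≤_π (aᵢ, bᵢ)` iff
`∑ᵢ |f_φ(pᵢ) − f_φ(qᵢ)|² ≤ ∑ᵢ |f_φ(aᵢ) − f_φ(bᵢ)|²` for every bounded multilinear
functional `φ` on `X₁ × ⋯ × Xₙ`. -/
def LePi {n m : ℕ} {X : Fin n → Type u}
    [∀ i, NormedAddCommGroup (X i)] [∀ i, NormedSpace 𝕜 (X i)]
    (p q a b : Fin m → ∀ i, X i) : Prop :=
  ∀ φ : ContinuousMultilinearMap 𝕜 X 𝕜,
    ∑ i, ‖φ (p i) - φ (q i)‖ ^ 2 ≤ ∑ i, ‖φ (a i) - φ (b i)‖ ^ 2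

/-- The tensor norm `γ` on `X₁ ⊗ ⋯ ⊗ Xₙ ⊗ Y`:
`γ(u) = inf (∑ᵢ π(aᵢ − bᵢ)²)^{1/2} (∑ᵢ ‖yᵢ‖²)^{1/2}`, the infimum over all representations
`u = ∑ᵢ (pᵢ − qᵢ) ⊗ yᵢ` with `pᵢ, qᵢ, aᵢ, bᵢ` decomposable and `(pᵢ, qᵢ) ≤_π (aᵢ, bᵢ)`. -/
def gammaTensor {n : ℕ} {X : Fin n → Type u} {Y : Type u}
    [∀ i, NormedAddCommGroup (X i)] [∀ i, NormedSpace 𝕜 (X i)]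
    [NormedAddCommGroup Y] [NormedSpace 𝕜 Y]
    (u : (⨂[𝕜] i, X i) ⊗[𝕜] Y) : ℝ :=
  sInf {r : ℝ | ∃ (m : ℕ) (p q a b : Fin m → ∀ i, X i) (y : Fin m → Y),
    (u = ∑ i, ((⨂ₜ[𝕜] j, p i j) - ⨂ₜ[𝕜] j, q i j) ⊗ₜ[𝕜] y i) ∧
    LePi 𝕜 p q a b ∧
    r = Real.sqrt (∑ i, projectiveSeminorm ((⨂ₜ[𝕜] j, a i j) - ⨂ₜ[𝕜] j, b i j) ^ 2) *
        Real.sqrt (∑ i, ‖y i‖ ^ 2)}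

variable {𝕜}

section FGHelpers

open PiTensorProduct

variable (𝕜) in
/-- The defining set for `gammaTensor`. -/
def gammaSet {n : ℕ} {X : Fin n → Type u} {Y : Type u}
    [∀ i, NormedAddCommGroup (X i)] [∀ i, NormedSpace 𝕜 (X i)]
    [NormedAddCommGroup Y] [NormedSpace 𝕜 Y]
    (u : (⨂[𝕜] i, X i) ⊗[𝕜] Y) : Set ℝ :=
  {r : ℝ | ∃ (m : ℕ) (p q a b : Fin m → ∀ i, X i) (y : Fin m → Y),
    (u = ∑ i, ((⨂ₜ[𝕜] j, p i j) - ⨂ₜ[𝕜] j, q i j) ⊗ₜ[𝕜] y i) ∧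
    LePi 𝕜 p q a b ∧
    r = Real.sqrt (∑ i, projectiveSeminorm ((⨂ₜ[𝕜] j, a i j) - ⨂ₜ[𝕜] j, b i j) ^ 2) *
        Real.sqrt (∑ i, ‖y i‖ ^ 2)}

variable {n : ℕ} {X : Fin n → Type u} {Y : Type u}
    [∀ i, NormedAddCommGroup (X i)] [∀ i, NormedSpace 𝕜 (X i)]
    [NormedAddCommGroup Y] [NormedSpace 𝕜 Y]

lemma gammaTensor_eq_sInf (u : (⨂[𝕜] i, X i) ⊗[𝕜] Y) :
    gammaTensor 𝕜 u = sInf (gammaSet 𝕜 u) := rfl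

lemma gammaSet_nonneg {u : (⨂[𝕜] i, X i) ⊗[𝕜] Y} {r : ℝ} (hr : r ∈ gammaSet 𝕜 u) : 0 ≤ r := by
  obtain ⟨m, p, q, a, b, y, -, -, rfl⟩ := hr
  positivity

lemma gammaSet_bddBelow (u : (⨂[𝕜] i, X i) ⊗[𝕜] Y) : BddBelow (gammaSet 𝕜 u) :=
  ⟨0, fun _ hr => gammaSet_nonneg hr⟩

lemma gammaTensor_nonneg (u : (⨂[𝕜] i, X i) ⊗[𝕜] Y) : 0 ≤ gammaTensor 𝕜 u :=
  Real.sInf_nonneg fun _ hr => gammaSet_nonneg hr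

lemma exists_list_rep (v : (⨂[𝕜] i, X i) ⊗[𝕜] Y) :
    ∃ L : List (𝕜 × (∀ i, X i) × Y),
      v = (L.map (fun t => (t.1 • ⨂ₜ[𝕜] i, t.2.1 i) ⊗ₜ[𝕜] t.2.2)).sum := by
  induction v using TensorProduct.induction_on with
  | zero => exact ⟨[], rfl⟩
  | tmul x y =>
      obtain ⟨p, hp⟩ := nonempty_lifts x
      rw [mem_lifts_iff] at hp
      refine ⟨List.map (fun c => (c.1, c.2, y)) (FreeAddMonoid.toList p), ?_⟩
      rw [List.map_map]
      have := map_list_sum (((TensorProduct.mk 𝕜 (⨂[𝕜] i, X i) Y).flip y))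
        (List.map (fun c : 𝕜 × ∀ i, X i => c.1 • ⨂ₜ[𝕜] i, c.2 i) (FreeAddMonoid.toList p))
      rw [hp, List.map_map] at this
      simpa [Function.comp_def, TensorProduct.smul_tmul'] using this
  | add x z hx hz =>
      obtain ⟨Lx, hLx⟩ := hx
      obtain ⟨Lz, hLz⟩ := hz
      exact ⟨Lx ++ Lz, by rw [List.map_append, List.sum_append, ← hLx, ← hLz]⟩

lemma exists_fin_rep (v : (⨂[𝕜] i, X i) ⊗[𝕜] Y) :
    ∃ (m : ℕ) (c : Fin m → 𝕜) (d : Fin m → ∀ i, X i) (y : Fin m → Y),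
      v = ∑ i, (c i • ⨂ₜ[𝕜] j, d i j) ⊗ₜ[𝕜] y i := by
  obtain ⟨L, hL⟩ := exists_list_rep v
  refine ⟨L.length, fun i => (L.get i).1, fun i => (L.get i).2.1, fun i => (L.get i).2.2, ?_⟩
  conv_lhs => rw [hL, ← List.ofFn_get L]
  rw [List.map_ofFn, List.sum_ofFn]
  rfl

lemma gammaSet_nonempty (hn : 0 < n) (v : (⨂[𝕜] i, X i) ⊗[𝕜] Y) :
    (gammaSet 𝕜 v).Nonempty := by
  obtain ⟨m, c, d, y, rfl⟩ := exists_fin_rep (𝕜 := 𝕜) v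
  set j0 : Fin n := ⟨0, hn⟩
  set p : Fin m → ∀ i, X i := fun k => Function.update (d k) j0 (c k • d k j0) with hpdef
  set q : Fin m → ∀ i, X i := fun _ _ => 0 with hqdef
  refine ⟨_, m, p, q, p, q, y, ?_, fun φ => le_rfl, rfl⟩
  refine Finset.sum_congr rfl fun k _ => ?_
  have h1 : (⨂ₜ[𝕜] j, p k j) = c k • ⨂ₜ[𝕜] j, d k j := by
    have h0 := MultilinearMap.map_update_smul (tprod 𝕜 (s := X)) (d k) j0 (c k) (d k j0)
    rw [Function.update_eq_self] at h0
    exact h0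
  have h2 : (⨂ₜ[𝕜] j, q k j) = 0 :=
    MultilinearMap.map_coord_zero (tprod 𝕜 (s := X)) j0 rfl
  rw [h1, h2, sub_zero]

lemma projectiveSeminorm_mapL_le {E : Fin n → Type u} [∀ i, NormedAddCommGroup (E i)]
    [∀ i, NormedSpace 𝕜 (E i)] (f : ∀ i, E i →ₗ[𝕜] X i) (hf : ∀ i e, ‖f i e‖ ≤ ‖e‖)
    (w : ⨂[𝕜] i, E i) :
    projectiveSeminorm (PiTensorProduct.map f w) ≤ projectiveSeminorm w := by
  rw [projectiveSeminorm_apply, projectiveSeminorm_apply]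
  haveI := nonempty_subtype.mpr (nonempty_lifts w)
  refine le_ciInf fun p => ?_
  have hp := (mem_lifts_iff _ _).mp p.2
  refine ciInf_le_of_le (bddBelow_projectiveSemiNormAux _)
    ⟨FreeAddMonoid.ofList (List.map (fun t => (t.1, fun i => f i (t.2 i))) (FreeAddMonoid.toList p.1)), ?_⟩ ?_
  · rw [mem_lifts_iff, FreeAddMonoid.toList_ofList, List.map_map]
    have := map_list_sum (PiTensorProduct.map f)
      (List.map (fun t : 𝕜 × ∀ i, E i => t.1 • ⨂ₜ[𝕜] i, t.2 i) (FreeAddMonoid.toList p.1))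
    rw [hp, List.map_map] at this
    rw [this]
    refine congrArg List.sum (List.map_congr_left fun t _ => ?_)
    simp [Function.comp]
  · show projectiveSeminormAux _ ≤ projectiveSeminormAux p.1
    simp only [projectiveSeminormAux, Function.comp_apply, FreeAddMonoid.toList_ofList, List.map_map]
    refine List.sum_le_sum fun t _ => ?_
    simp only [Function.comp_apply]
    exact mul_le_mul_of_nonneg_left
      (Finset.prod_le_prod (fun i _ => norm_nonneg _) (fun i _ => hf i _)) (norm_nonneg _)

lemma exists_lift_aux_le (x : ⨂[𝕜] i, X i) {δ : ℝ} (hδ : 0 < δ) :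
    ∃ p : lifts x, projectiveSeminormAux p.1 ≤ projectiveSeminorm x + δ := by
  haveI := nonempty_subtype.mpr (nonempty_lifts x)
  obtain ⟨p, hp⟩ := exists_lt_of_ciInf_lt
    (show ⨅ (p : lifts x), projectiveSeminormAux p.1 < projectiveSeminorm x + δ from
      lt_add_of_pos_right _ hδ)
  exact ⟨p, hp.le⟩

lemma lePi_comp_proj {E : ∀ i, Submodule 𝕜 (X i)} (P : ∀ i, X i →L[𝕜] E i)
    {m : ℕ} {p q a b : Fin m → ∀ i, X i} (hle : LePi 𝕜 p q a b) :
    LePi 𝕜 (fun k i => P i (p k i)) (fun k i => P i (q k i))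
      (fun k i => P i (a k i)) (fun k i => P i (b k i)) := by
  intro φ
  have h := hle (φ.compContinuousLinearMap P)
  simpa only [ContinuousMultilinearMap.compContinuousLinearMap_apply] using h

end FGHelpers

set_option maxHeartbeats 3200000 in
/-- The norm `γ` is finitely generated: for all Banach spaces
`X₁,…,Xₙ, Y` and every `u ∈ X₁ ⊗ ⋯ ⊗ Xₙ ⊗ Y`,
`γ(u; X₁ ⊗ ⋯ ⊗ Xₙ ⊗ Y) = inf γ(v; E₁ ⊗ ⋯ ⊗ Eₙ ⊗ F)`, the infimum being over all
finite-dimensional subspaces `Eᵢ ⊆ Xᵢ` and `F ⊆ Y` and elements `v` of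
`E₁ ⊗ ⋯ ⊗ Eₙ ⊗ F` mapping to `u` under the canonical inclusion. -/
theorem gammaTensor_finitely_generated {n : ℕ} (hn : 0 < n) {X : Fin n → Type u} {Y : Type u}
    [∀ i, NormedAddCommGroup (X i)] [∀ i, NormedSpace 𝕜 (X i)] [∀ i, CompleteSpace (X i)]
    [NormedAddCommGroup Y] [NormedSpace 𝕜 Y] [CompleteSpace Y]
    (u : (⨂[𝕜] i, X i) ⊗[𝕜] Y) :
    gammaTensor 𝕜 u =
      sInf {r : ℝ | ∃ (E : ∀ i, Submodule 𝕜 (X i)) (F : Submodule 𝕜 Y)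
        (_ : ∀ i, FiniteDimensional 𝕜 (E i)) (_ : FiniteDimensional 𝕜 F)
        (v : (⨂[𝕜] i, E i) ⊗[𝕜] F),
        TensorProduct.map (PiTensorProduct.map fun i => (E i).subtype) F.subtype v = u ∧
        r = gammaTensor 𝕜 v} := by
  classical
  refine le_antisymm ?_ ?_
  · -- `γ(u) ≤ inf over subspaces`
    refine le_csInf ?_ ?_
    · -- the set of subspace values is nonempty
      obtain ⟨m, c, d, y, hrep⟩ := exists_fin_rep (𝕜 := 𝕜) u
      set E : ∀ i, Submodule 𝕜 (X i) := fun i => Submodule.span 𝕜 (Set.range fun k => d k i)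
        with hE
      set F : Submodule 𝕜 Y := Submodule.span 𝕜 (Set.range y) with hF
      haveI hEfd : ∀ i, FiniteDimensional 𝕜 (E i) := fun i =>
        FiniteDimensional.span_of_finite 𝕜 (Set.finite_range _)
      haveI hFfd : FiniteDimensional 𝕜 F := FiniteDimensional.span_of_finite 𝕜 (Set.finite_range _)
      refine ⟨_, E, F, hEfd, hFfd,
        ∑ k, (c k • ⨂ₜ[𝕜] j, (⟨d k j, Submodule.subset_span ⟨k, rfl⟩⟩ : E j)) ⊗ₜ[𝕜]
          (⟨y k, Submodule.subset_span ⟨k, rfl⟩⟩ : F), ?_, rfl⟩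
      rw [map_sum, hrep]
      refine Finset.sum_congr rfl fun k _ => ?_
      simp [TensorProduct.map_tmul, PiTensorProduct.map_tprod]
    · rintro r ⟨E, F, hE, hF, v, hv, rfl⟩
      rw [gammaTensor_eq_sInf, gammaTensor_eq_sInf]
      refine le_csInf (gammaSet_nonempty hn v) ?_
      rintro s ⟨m, p, q, a, b, y, hrep, hle, rfl⟩
      refine csInf_le_of_le (gammaSet_bddBelow _)
        ⟨m, fun k j => ↑(p k j), fun k j => ↑(q k j), fun k j => ↑(a k j), fun k j => ↑(b k j),
          fun k => ↑(y k), ?_, ?_, rfl⟩ ?_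
      · -- representation of u
        rw [← hv, hrep, map_sum]
        refine Finset.sum_congr rfl fun k _ => ?_
        simp [TensorProduct.map_tmul, PiTensorProduct.map_tprod, map_sub]
      · -- LePi is preserved by restriction of functionals
        intro φ
        have := hle (φ.compContinuousLinearMap fun i => (E i).subtypeL)
        simpa [ContinuousMultilinearMap.compContinuousLinearMap_apply] using this
      · -- the value does not increase
        have hAB : ∀ k,
            projectiveSeminorm ((⨂ₜ[𝕜] j, ((a k j : X j))) - ⨂ₜ[𝕜] j, ((b k j : X j)))
              ≤ projectiveSeminorm ((⨂ₜ[𝕜] j, a k j) - ⨂ₜ[𝕜] j, b k j) := by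
          intro k
          have h1 : (⨂ₜ[𝕜] j, ((a k j : X j))) - (⨂ₜ[𝕜] j, ((b k j : X j)))
              = PiTensorProduct.map (fun i => (E i).subtype)
                  ((⨂ₜ[𝕜] j, a k j) - ⨂ₜ[𝕜] j, b k j) := by
            rw [map_sub]
            simp [PiTensorProduct.map_tprod]
          rw [h1]
          exact projectiveSeminorm_mapL_le _ (fun i e => le_of_eq (Submodule.norm_coe e)) _
        have hy : ∀ k, ‖(y k : Y)‖ = ‖y k‖ := fun k => Submodule.norm_coe _
        refine mul_le_mul ?_ ?_ (Real.sqrt_nonneg _) (Real.sqrt_nonneg _)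
        · refine Real.sqrt_le_sqrt (Finset.sum_le_sum fun k _ => ?_)
          exact pow_le_pow_left₀ (apply_nonneg _ _) (hAB k) 2
        · exact le_of_eq (by simp only [Submodule.norm_coe])
  · -- `inf over subspaces ≤ γ(u)`
    refine le_csInf (gammaSet_nonempty hn u) ?_
    rintro s ⟨m, p, q, a, b, y, hrep, hle, rfl⟩
    refine le_of_forall_pos_le_add fun ε hε => ?_
    set Sy : ℝ := Real.sqrt (∑ k, ‖y k‖ ^ 2) with hSy
    have hSy0 : 0 ≤ Sy := Real.sqrt_nonneg _
    set δ : ℝ := ε / (Real.sqrt m * Sy + 1) with hδdef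
    have hden : (0:ℝ) < Real.sqrt m * Sy + 1 := by positivity
    have hδpos : 0 < δ := div_pos hε hden
    -- near-optimal lifts of the aᵢ - bᵢ
    have hLex := fun k : Fin m =>
      exists_lift_aux_le ((⨂ₜ[𝕜] j, a k j) - ⨂ₜ[𝕜] j, b k j) hδpos
    choose L hL using hLex
    -- the finite-dimensional subspaces
    set S : ∀ i, Set (X i) := fun i =>
      (Set.range fun k => p k i) ∪ (Set.range fun k => q k i) ∪ (Set.range fun k => a k i) ∪
      (Set.range fun k => b k i) ∪
      ⋃ k, (fun t : 𝕜 × ∀ j, X j => t.2 i) '' {t | t ∈ FreeAddMonoid.toList (L k).1} with hSdef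
    have hSfin : ∀ i, (S i).Finite := by
      intro i
      refine (((((Set.finite_range _).union (Set.finite_range _)).union
        (Set.finite_range _)).union (Set.finite_range _)).union ?_)
      exact Set.finite_iUnion fun k => Set.Finite.image _ (List.finite_toSet _)
    set E : ∀ i, Submodule 𝕜 (X i) := fun i => Submodule.span 𝕜 (S i) with hEdef
    haveI hEfd : ∀ i, FiniteDimensional 𝕜 (E i) := fun i =>
      FiniteDimensional.span_of_finite 𝕜 (hSfin i)
    set F : Submodule 𝕜 Y := Submodule.span 𝕜 (Set.range y) with hFdef
    haveI hFfd : FiniteDimensional 𝕜 F := FiniteDimensional.span_of_finite 𝕜 (Set.finite_range _)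
    -- memberships
    have hpm : ∀ k i, p k i ∈ E i := fun k i => Submodule.subset_span
      (Or.inl (Or.inl (Or.inl (Or.inl ⟨k, rfl⟩))))
    have hqm : ∀ k i, q k i ∈ E i := fun k i => Submodule.subset_span
      (Or.inl (Or.inl (Or.inl (Or.inr ⟨k, rfl⟩))))
    have ham : ∀ k i, a k i ∈ E i := fun k i => Submodule.subset_span
      (Or.inl (Or.inl (Or.inr ⟨k, rfl⟩)))
    have hbm : ∀ k i, b k i ∈ E i := fun k i => Submodule.subset_span
      (Or.inl (Or.inr ⟨k, rfl⟩))
    have hLm : ∀ (k : Fin m) t, t ∈ FreeAddMonoid.toList (L k).1 → ∀ i, t.2 i ∈ E i :=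
      fun k t ht i => Submodule.subset_span (Or.inr (Set.mem_iUnion.2 ⟨k, ⟨t, ht, rfl⟩⟩))
    -- continuous projections onto the subspaces
    have hproj := fun i => Submodule.ClosedComplemented.of_finiteDimensional (E i)
    choose P hP using hproj
    have hPmem : ∀ i (x : X i) (hx : x ∈ E i), ((P i x : X i)) = x := by
      intro i x hx
      have : P i ((⟨x, hx⟩ : E i) : X i) = ⟨x, hx⟩ := hP i ⟨x, hx⟩
      rw [this]
    have hPnorm : ∀ i (x : X i), x ∈ E i → ‖P i x‖ = ‖x‖ := by
      intro i x hx
      rw [← Submodule.norm_coe (P i x), hPmem i x hx]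
    -- the element of the subspace tensor product
    set p' : Fin m → ∀ i, E i := fun k i => P i (p k i) with hp'
    set q' : Fin m → ∀ i, E i := fun k i => P i (q k i) with hq'
    set a' : Fin m → ∀ i, E i := fun k i => P i (a k i) with ha'
    set b' : Fin m → ∀ i, E i := fun k i => P i (b k i) with hb'
    set y' : Fin m → F := fun k => ⟨y k, Submodule.subset_span ⟨k, rfl⟩⟩ with hy'
    set v : (⨂[𝕜] i, E i) ⊗[𝕜] F :=
      ∑ k, ((⨂ₜ[𝕜] j, p' k j) - ⨂ₜ[𝕜] j, q' k j) ⊗ₜ[𝕜] y' k with hvdef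
    -- the seminorm estimate
    have hπ : ∀ k, projectiveSeminorm ((⨂ₜ[𝕜] j, a' k j) - ⨂ₜ[𝕜] j, b' k j)
        ≤ projectiveSeminorm ((⨂ₜ[𝕜] j, a k j) - ⨂ₜ[𝕜] j, b k j) + δ := by
      intro k
      refine le_trans ?_ (hL k)
      set ρ : (⨂[𝕜] i, X i) →ₗ[𝕜] ⨂[𝕜] i, E i :=
        PiTensorProduct.map (fun i => (P i : X i →ₗ[𝕜] E i)) with hρ
      have h1 : (⨂ₜ[𝕜] j, a' k j) - (⨂ₜ[𝕜] j, b' k j)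
          = ρ ((⨂ₜ[𝕜] j, a k j) - ⨂ₜ[𝕜] j, b k j) := by
        rw [map_sub]
        simp [hρ, PiTensorProduct.map_tprod]
        rfl
      have hLk := (mem_lifts_iff _ _).mp (L k).2
      have h2 : FreeAddMonoid.ofList (List.map (fun t : 𝕜 × ∀ i, X i => (t.1, fun i => P i (t.2 i))) (FreeAddMonoid.toList (L k).1))
          ∈ lifts (ρ ((⨂ₜ[𝕜] j, a k j) - ⨂ₜ[𝕜] j, b k j)) := by
        rw [mem_lifts_iff, FreeAddMonoid.toList_ofList, List.map_map]
        have := map_list_sum ρ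
          (List.map (fun t : 𝕜 × ∀ i, X i => t.1 • ⨂ₜ[𝕜] i, t.2 i) (FreeAddMonoid.toList (L k).1))
        rw [hLk, List.map_map] at this
        rw [this]
        refine congrArg List.sum (List.map_congr_left fun t _ => ?_)
        simp [hρ, Function.comp, PiTensorProduct.map_tprod]
      have h3 : projectiveSeminorm (ρ ((⨂ₜ[𝕜] j, a k j) - ⨂ₜ[𝕜] j, b k j))
          ≤ projectiveSeminormAux
            (FreeAddMonoid.ofList (List.map (fun t : 𝕜 × ∀ i, X i => (t.1, fun i => P i (t.2 i))) (FreeAddMonoid.toList (L k).1))) := by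
        rw [projectiveSeminorm_apply]
        exact ciInf_le (bddBelow_projectiveSemiNormAux _) ⟨_, h2⟩
      have h4 : projectiveSeminormAux
            (FreeAddMonoid.ofList (List.map (fun t : 𝕜 × ∀ i, X i => (t.1, fun i => P i (t.2 i))) (FreeAddMonoid.toList (L k).1)))
          = projectiveSeminormAux (L k).1 := by
        simp only [projectiveSeminormAux, Function.comp_apply, FreeAddMonoid.toList_ofList, List.map_map]
        refine congrArg List.sum (List.map_congr_left fun t ht => ?_)
        simp only [Function.comp_apply]
        congr 1
        exact Finset.prod_congr rfl fun i _ => hPnorm i (t.2 i) (hLm k t ht i)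
      rw [h1]
      exact h3.trans (le_of_eq h4)
    -- `v` is a legitimate preimage of `u`
    have hmapv : TensorProduct.map (PiTensorProduct.map fun i => (E i).subtype) F.subtype v
        = u := by
      rw [hvdef, map_sum, hrep]
      refine Finset.sum_congr rfl fun k _ => ?_
      rw [TensorProduct.map_tmul, map_sub]
      simp only [PiTensorProduct.map_tprod, Submodule.subtype_apply, hp', hq', hy']
      congr 2
      · exact congrArg _ (funext fun j => hPmem j (p k j) (hpm k j))
      · exact congrArg _ (funext fun j => hPmem j (q k j) (hqm k j))
    -- LePi transfers to the subspaces via the projections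
    have hlep : LePi 𝕜 p' q' a' b' := lePi_comp_proj P hle
    -- the gammaSet estimate in the subspaces
    have hmem : Real.sqrt (∑ k, projectiveSeminorm ((⨂ₜ[𝕜] j, a' k j) - ⨂ₜ[𝕜] j, b' k j) ^ 2) *
        Real.sqrt (∑ k, ‖y' k‖ ^ 2) ∈ gammaSet 𝕜 v :=
      ⟨m, p', q', a', b', y', hvdef, hlep, rfl⟩
    have hγv := csInf_le (gammaSet_bddBelow v) hmem
    -- Minkowski's inequality
    have hmink : Real.sqrt (∑ k,
          (projectiveSeminorm ((⨂ₜ[𝕜] j, a k j) - ⨂ₜ[𝕜] j, b k j) + δ) ^ 2)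
        ≤ Real.sqrt (∑ k, projectiveSeminorm ((⨂ₜ[𝕜] j, a k j) - ⨂ₜ[𝕜] j, b k j) ^ 2) +
          δ * Real.sqrt m := by
      set f : EuclideanSpace ℝ (Fin m) :=
        WithLp.toLp 2 (fun k => projectiveSeminorm ((⨂ₜ[𝕜] j, a k j) - ⨂ₜ[𝕜] j, b k j)) with hf
      set g : EuclideanSpace ℝ (Fin m) := WithLp.toLp 2 (fun _ => δ) with hg
      have h1 : Real.sqrt (∑ k,
          (projectiveSeminorm ((⨂ₜ[𝕜] j, a k j) - ⨂ₜ[𝕜] j, b k j) + δ) ^ 2) = ‖f + g‖ := by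
        rw [EuclideanSpace.norm_eq]
        congr 1
        refine Finset.sum_congr rfl fun k _ => ?_
        simp [hf, hg, Real.norm_eq_abs, sq_abs]
      have h2 : ‖f‖ = Real.sqrt (∑ k,
          projectiveSeminorm ((⨂ₜ[𝕜] j, a k j) - ⨂ₜ[𝕜] j, b k j) ^ 2) := by
        rw [EuclideanSpace.norm_eq]
        congr 1
        exact Finset.sum_congr rfl fun k _ => by simp [hf, Real.norm_eq_abs, sq_abs]
      have h3 : ‖g‖ = δ * Real.sqrt m := by
        rw [EuclideanSpace.norm_eq]
        simp only [hg, PiLp.toLp_apply, Real.norm_eq_abs, sq_abs, Finset.sum_const, Finset.card_univ,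
          Fintype.card_fin, nsmul_eq_mul]
        rw [Real.sqrt_mul (Nat.cast_nonneg m), Real.sqrt_sq hδpos.le, mul_comm]
      rw [h1, ← h2, ← h3]
      exact norm_add_le f g
    -- put everything together
    have hval : Real.sqrt (∑ k,
          projectiveSeminorm ((⨂ₜ[𝕜] j, a' k j) - ⨂ₜ[𝕜] j, b' k j) ^ 2) *
        Real.sqrt (∑ k, ‖y' k‖ ^ 2)
        ≤ Real.sqrt (∑ k, projectiveSeminorm ((⨂ₜ[𝕜] j, a k j) - ⨂ₜ[𝕜] j, b k j) ^ 2) *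
          Real.sqrt (∑ k, ‖y k‖ ^ 2) + ε := by
      have hynorm : Real.sqrt (∑ k, ‖y' k‖ ^ 2) = Sy := by
        rw [hSy]
        congr 1
      have hsq : Real.sqrt (∑ k,
            projectiveSeminorm ((⨂ₜ[𝕜] j, a' k j) - ⨂ₜ[𝕜] j, b' k j) ^ 2)
          ≤ Real.sqrt (∑ k, projectiveSeminorm ((⨂ₜ[𝕜] j, a k j) - ⨂ₜ[𝕜] j, b k j) ^ 2) +
            δ * Real.sqrt m := by
        refine le_trans (Real.sqrt_le_sqrt (Finset.sum_le_sum fun k _ => ?_)) hmink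
        exact pow_le_pow_left₀ (apply_nonneg _ _) (hπ k) 2
      rw [hynorm]
      calc Real.sqrt (∑ k,
              projectiveSeminorm ((⨂ₜ[𝕜] j, a' k j) - ⨂ₜ[𝕜] j, b' k j) ^ 2) * Sy
          ≤ (Real.sqrt (∑ k, projectiveSeminorm ((⨂ₜ[𝕜] j, a k j) - ⨂ₜ[𝕜] j, b k j) ^ 2) +
            δ * Real.sqrt m) * Sy := mul_le_mul_of_nonneg_right hsq hSy0
        _ = Real.sqrt (∑ k, projectiveSeminorm ((⨂ₜ[𝕜] j, a k j) - ⨂ₜ[𝕜] j, b k j) ^ 2) * Sy +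
            δ * (Real.sqrt m * Sy) := by ring
        _ ≤ Real.sqrt (∑ k, projectiveSeminorm ((⨂ₜ[𝕜] j, a k j) - ⨂ₜ[𝕜] j, b k j) ^ 2) * Sy
            + ε := by
            have h5 : δ * (Real.sqrt m * Sy) ≤ δ * (Real.sqrt m * Sy + 1) :=
              mul_le_mul_of_nonneg_left (by linarith) hδpos.le
            have h6 : δ * (Real.sqrt m * Sy + 1) = ε := by
              rw [hδdef, div_mul_cancel₀ _ hden.ne']
            linarith
    -- conclude
    refine csInf_le_of_le ⟨0, fun r hr => ?_⟩
      ⟨E, F, hEfd, hFfd, v, hmapv, rfl⟩ (hγv.trans hval)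
    obtain ⟨_, _, _, _, w, _, rfl⟩ := hr
    exact gammaTensor_nonneg w
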